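/- arXiv:1002.3194 — 2 statements merged into one kernel-verified Lean document; each statement's English description precedes it below -/
import Mathlib

section
/- The six-vertex R-matrix R(u,v), defined as the 4x4 matrix with diagonal entries [1+(u−v)/2], [(u−v)/2], [(u−v)/2], [1+(u−v)/2] along positions (1,1),(2,2),(3,3),(4,4) and off-diagonal entries q^{(−u+v)/2} at (2,3) and q^{(u−v)/2} at (3,2), satisfies the Yang–Baxter equation R_{12}(u,v) R_{13}(u,w) R_{23}(v,w) = R_{23}(v,w) R_{13}(u,w) R_{12}(u,v) as an identity in End(C^2 ⊗ C^2 ⊗ C^2). -/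
open Complex

/-- `q^z := exp (z * l)` for a fixed branch `l` of `log q`. -/
noncomputable def qPow (l z : ℂ) : ℂ := Complex.exp (z * l)

/-- The q-number `[z] = (q^z - q^{-z})/(q - q⁻¹)`. -/
noncomputable def qNum (q l z : ℂ) : ℂ := (qPow l z - qPow l (-z)) / (q - q⁻¹)

/-- The six-vertex R-matrix `R(u,v)` on `ℂ² ⊗ ℂ²` (basis order `(1,2,3,4) =
((0,0),(0,1),(1,0),(1,1))`): diagonal entries `[1+(u−v)/2], [(u−v)/2],
[(u−v)/2], [1+(u−v)/2]`, entry `q^{(v−u)/2}` at position `(2,3)` and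
`q^{(u−v)/2}` at position `(3,2)`. -/
noncomputable def Rmat (q l u v : ℂ) :
    Matrix (Fin 2 × Fin 2) (Fin 2 × Fin 2) ℂ := fun p p' =>
  if p = p' then
    (if p.1 = p.2 then qNum q l (1 + (u - v) / 2) else qNum q l ((u - v) / 2))
  else if p = ((0 : Fin 2), (1 : Fin 2)) ∧ p' = ((1 : Fin 2), (0 : Fin 2)) then
    qPow l ((v - u) / 2)
  else if p = ((1 : Fin 2), (0 : Fin 2)) ∧ p' = ((0 : Fin 2), (1 : Fin 2)) then
    qPow l ((u - v) / 2)
  else 0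

/-- `R₁₂(u,v)` acting on factors 1 and 2 of `ℂ² ⊗ ℂ² ⊗ ℂ²`. -/
noncomputable def R12 (q l u v : ℂ) :
    Matrix (Fin 2 × Fin 2 × Fin 2) (Fin 2 × Fin 2 × Fin 2) ℂ := fun p p' =>
  Rmat q l u v (p.1, p.2.1) (p'.1, p'.2.1) * (if p.2.2 = p'.2.2 then 1 else 0)

/-- `R₁₃(u,v)` acting on factors 1 and 3. -/
noncomputable def R13 (q l u v : ℂ) :
    Matrix (Fin 2 × Fin 2 × Fin 2) (Fin 2 × Fin 2 × Fin 2) ℂ := fun p p' =>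
  Rmat q l u v (p.1, p.2.2) (p'.1, p'.2.2) * (if p.2.1 = p'.2.1 then 1 else 0)

/-- `R₂₃(u,v)` acting on factors 2 and 3. -/
noncomputable def R23 (q l u v : ℂ) :
    Matrix (Fin 2 × Fin 2 × Fin 2) (Fin 2 × Fin 2 × Fin 2) ℂ := fun p p' =>
  (if p.1 = p'.1 then 1 else 0) * Rmat q l u v (p.2.1, p.2.2) (p'.2.1, p'.2.2)

/-! ### Auxiliary: a polynomial rescaling of the R-matrix -/

/-- A polynomial version of the R-matrix: `Pmat q q⁻¹ x y` equals
`(q - q⁻¹) * x * y` times `Rmat` with `x = q^{u/2}`, `y = q^{v/2}`. -/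
noncomputable def Pmat (s t x y : ℂ) : Matrix (Fin 2 × Fin 2) (Fin 2 × Fin 2) ℂ := fun p p' =>
  if p = p' then (if p.1 = p.2 then s * x ^ 2 - t * y ^ 2 else x ^ 2 - y ^ 2)
  else if p = ((0 : Fin 2), (1 : Fin 2)) ∧ p' = ((1 : Fin 2), (0 : Fin 2)) then (s - t) * y ^ 2
  else if p = ((1 : Fin 2), (0 : Fin 2)) ∧ p' = ((0 : Fin 2), (1 : Fin 2)) then (s - t) * x ^ 2
  else 0

lemma Pv0000 (s t x y : ℂ) : Pmat s t x y ((0:Fin 2),(0:Fin 2)) ((0:Fin 2),(0:Fin 2)) = (s * x ^ 2 - t * y ^ 2) := by simp [Pmat, Prod.ext_iff]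
lemma Pv0001 (s t x y : ℂ) : Pmat s t x y ((0:Fin 2),(0:Fin 2)) ((0:Fin 2),(1:Fin 2)) = 0 := by simp [Pmat, Prod.ext_iff]
lemma Pv0010 (s t x y : ℂ) : Pmat s t x y ((0:Fin 2),(0:Fin 2)) ((1:Fin 2),(0:Fin 2)) = 0 := by simp [Pmat, Prod.ext_iff]
lemma Pv0011 (s t x y : ℂ) : Pmat s t x y ((0:Fin 2),(0:Fin 2)) ((1:Fin 2),(1:Fin 2)) = 0 := by simp [Pmat, Prod.ext_iff]
lemma Pv0100 (s t x y : ℂ) : Pmat s t x y ((0:Fin 2),(1:Fin 2)) ((0:Fin 2),(0:Fin 2)) = 0 := by simp [Pmat, Prod.ext_iff]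
lemma Pv0101 (s t x y : ℂ) : Pmat s t x y ((0:Fin 2),(1:Fin 2)) ((0:Fin 2),(1:Fin 2)) = (x ^ 2 - y ^ 2) := by simp [Pmat, Prod.ext_iff]
lemma Pv0110 (s t x y : ℂ) : Pmat s t x y ((0:Fin 2),(1:Fin 2)) ((1:Fin 2),(0:Fin 2)) = ((s - t) * y ^ 2) := by simp [Pmat, Prod.ext_iff]
lemma Pv0111 (s t x y : ℂ) : Pmat s t x y ((0:Fin 2),(1:Fin 2)) ((1:Fin 2),(1:Fin 2)) = 0 := by simp [Pmat, Prod.ext_iff]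
lemma Pv1000 (s t x y : ℂ) : Pmat s t x y ((1:Fin 2),(0:Fin 2)) ((0:Fin 2),(0:Fin 2)) = 0 := by simp [Pmat, Prod.ext_iff]
lemma Pv1001 (s t x y : ℂ) : Pmat s t x y ((1:Fin 2),(0:Fin 2)) ((0:Fin 2),(1:Fin 2)) = ((s - t) * x ^ 2) := by simp [Pmat, Prod.ext_iff]
lemma Pv1010 (s t x y : ℂ) : Pmat s t x y ((1:Fin 2),(0:Fin 2)) ((1:Fin 2),(0:Fin 2)) = (x ^ 2 - y ^ 2) := by simp [Pmat, Prod.ext_iff]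
lemma Pv1011 (s t x y : ℂ) : Pmat s t x y ((1:Fin 2),(0:Fin 2)) ((1:Fin 2),(1:Fin 2)) = 0 := by simp [Pmat, Prod.ext_iff]
lemma Pv1100 (s t x y : ℂ) : Pmat s t x y ((1:Fin 2),(1:Fin 2)) ((0:Fin 2),(0:Fin 2)) = 0 := by simp [Pmat, Prod.ext_iff]
lemma Pv1101 (s t x y : ℂ) : Pmat s t x y ((1:Fin 2),(1:Fin 2)) ((0:Fin 2),(1:Fin 2)) = 0 := by simp [Pmat, Prod.ext_iff]
lemma Pv1110 (s t x y : ℂ) : Pmat s t x y ((1:Fin 2),(1:Fin 2)) ((1:Fin 2),(0:Fin 2)) = 0 := by simp [Pmat, Prod.ext_iff]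
lemma Pv1111 (s t x y : ℂ) : Pmat s t x y ((1:Fin 2),(1:Fin 2)) ((1:Fin 2),(1:Fin 2)) = (s * x ^ 2 - t * y ^ 2) := by simp [Pmat, Prod.ext_iff]

noncomputable def B12 (s t x y : ℂ) :
    Matrix (Fin 2 × Fin 2 × Fin 2) (Fin 2 × Fin 2 × Fin 2) ℂ := fun p p' =>
  Pmat s t x y (p.1, p.2.1) (p'.1, p'.2.1) * (if p.2.2 = p'.2.2 then 1 else 0)

noncomputable def B13 (s t x y : ℂ) :
    Matrix (Fin 2 × Fin 2 × Fin 2) (Fin 2 × Fin 2 × Fin 2) ℂ := fun p p' =>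
  Pmat s t x y (p.1, p.2.2) (p'.1, p'.2.2) * (if p.2.1 = p'.2.1 then 1 else 0)

noncomputable def B23 (s t x y : ℂ) :
    Matrix (Fin 2 × Fin 2 × Fin 2) (Fin 2 × Fin 2 × Fin 2) ℂ := fun p p' =>
  (if p.1 = p'.1 then 1 else 0) * Pmat s t x y (p.2.1, p.2.2) (p'.2.1, p'.2.2)

set_option maxHeartbeats 2000000 in
/-- The Yang–Baxter equation for the polynomial version. -/
theorem ybe_poly (q x y z : ℂ) (hq : q ≠ 0) :
    B12 q q⁻¹ x y * B13 q q⁻¹ x z * B23 q q⁻¹ y z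
      = B23 q q⁻¹ y z * B13 q q⁻¹ x z * B12 q q⁻¹ x y := by
  ext ⟨a, b, c⟩ ⟨d, e, f⟩
  fin_cases a <;> fin_cases b <;> fin_cases c <;> fin_cases d <;> fin_cases e <;> fin_cases f <;>
    simp only [Matrix.mul_apply, Fintype.sum_prod_type, Fin.sum_univ_two, B12, B13, B23,
      Fin.zero_eta, Fin.mk_one, Fin.isValue,
      Pv0000, Pv0001, Pv0010, Pv0011, Pv0100, Pv0101, Pv0110, Pv0111, Pv1000, Pv1001, Pv1010, Pv1011, Pv1100, Pv1101, Pv1110, Pv1111, Fin.zero_eq_one_iff, Fin.one_eq_zero_iff, Nat.succ_ne_self,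
      mul_zero, zero_mul, mul_one, one_mul, add_zero, zero_add,
      ite_true, ite_false, if_false, if_true, Fin.reduceEq, reduceIte] <;>
    first
      | ring1
      | (field_simp; ring1)

set_option maxHeartbeats 1000000 in
/-- `Rmat` is a scalar multiple of the polynomial matrix. -/
lemma Rmat_smul (q l : ℂ) (hq : q ≠ 0) (hqq : q - q⁻¹ ≠ 0) (hl : Complex.exp l = q) (u v : ℂ) :
    Rmat q l u v
      = (((q - q⁻¹) * Complex.exp (u * l / 2) * Complex.exp (v * l / 2))⁻¹) •
        Pmat q q⁻¹ (Complex.exp (u * l / 2)) (Complex.exp (v * l / 2)) := by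
  have hX : Complex.exp (u * l / 2) ≠ 0 := Complex.exp_ne_zero _
  have hY : Complex.exp (v * l / 2) ≠ 0 := Complex.exp_ne_zero _
  have hq2 : q * q - 1 ≠ 0 := by
    have h : q * q - 1 = (q - q⁻¹) * q := by field_simp
    rw [h]; exact mul_ne_zero hqq hq
  have p1 : qPow l (1 + (u - v) / 2)
      = q * Complex.exp (u * l / 2) / Complex.exp (v * l / 2) := by
    rw [qPow, ← hl, ← Complex.exp_add, ← Complex.exp_sub]; congr 1; ring
  have p2 : qPow l (-(1 + (u - v) / 2))
      = q⁻¹ * Complex.exp (v * l / 2) / Complex.exp (u * l / 2) := by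
    rw [qPow, ← hl, ← Complex.exp_neg, ← Complex.exp_add, ← Complex.exp_sub]; congr 1; ring
  have p3 : qPow l ((u - v) / 2)
      = Complex.exp (u * l / 2) / Complex.exp (v * l / 2) := by
    rw [qPow, ← Complex.exp_sub]; congr 1; ring
  have p4 : qPow l (-((u - v) / 2))
      = Complex.exp (v * l / 2) / Complex.exp (u * l / 2) := by
    rw [qPow, ← Complex.exp_sub]; congr 1; ring
  have p5 : qPow l ((v - u) / 2)
      = Complex.exp (v * l / 2) / Complex.exp (u * l / 2) := by
    rw [qPow, ← Complex.exp_sub]; congr 1; ring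
  funext p p'
  simp only [Rmat, Pmat, Matrix.smul_apply, smul_eq_mul, qNum]
  split_ifs
  · rw [p1, p2]; field_simp [hq, hq2, hX, hY]
  · rw [p3, p4]; field_simp [hq, hq2, hX, hY]
  · rw [p5]; field_simp [hq, hq2, hX, hY]; try ring
    have h' : -1 + q ^ 2 ≠ 0 := by intro h; apply hq2; linear_combination h
    linear_combination (-1 : ℂ) * mul_inv_cancel₀ h'
  · rw [p3]; field_simp [hq, hq2, hX, hY]; try ring
    have h' : -1 + q ^ 2 ≠ 0 := by intro h; apply hq2; linear_combination h
    linear_combination (-1 : ℂ) * mul_inv_cancel₀ h'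
  · ring

/-- the six-vertex R-matrix satisfies the Yang–Baxter equation. -/
theorem sixVertex_yang_baxter (q l : ℂ) (hq : q ≠ 0) (hqq : q - q⁻¹ ≠ 0)
    (hl : Complex.exp l = q) (u v w : ℂ) :
    R12 q l u v * R13 q l u w * R23 q l v w
      = R23 q l v w * R13 q l u w * R12 q l u v := by
  set X := Complex.exp (u * l / 2) with hXdef
  set Y := Complex.exp (v * l / 2) with hYdef
  set Z := Complex.exp (w * l / 2) with hZdef
  have h12 : R12 q l u v = (((q - q⁻¹) * X * Y)⁻¹) • B12 q q⁻¹ X Y := by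
    funext p p'
    simp only [R12, B12, Matrix.smul_apply, smul_eq_mul,
      Rmat_smul q l hq hqq hl u v, ← hXdef, ← hYdef]
    ring
  have h13 : R13 q l u w = (((q - q⁻¹) * X * Z)⁻¹) • B13 q q⁻¹ X Z := by
    funext p p'
    simp only [R13, B13, Matrix.smul_apply, smul_eq_mul,
      Rmat_smul q l hq hqq hl u w, ← hXdef, ← hZdef]
    ring
  have h23 : R23 q l v w = (((q - q⁻¹) * Y * Z)⁻¹) • B23 q q⁻¹ Y Z := by
    funext p p'
    simp only [R23, B23, Matrix.smul_apply, smul_eq_mul,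
      Rmat_smul q l hq hqq hl v w, ← hYdef, ← hZdef]
    ring
  rw [h12, h13, h23]
  simp only [Matrix.smul_mul, Matrix.mul_smul, smul_smul]
  rw [ybe_poly q X Y Z hq]
  congr 1
  ring
end

section
/- Let A be a Hermitian operator (finite-dimensional, here End((C^2)^{⊗L})) and suppose invertible positive operators T_1(u), T_2(u) depend analytically on u with T_1(u) = e^{iP}(Id + uA + O(u^2)) and T_2(u) = e^{−iP}(Id + uA + O(u^2)) for a unitary e^{iP} commuting with A. Then for β > 0, lim_{N→∞} (T_1(−β/N) T_2(−β/N))^{N/2} = e^{−βA} (Trotter-type limit). -/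
open Matrix Filter
open scoped ComplexOrder

attribute [local instance] Matrix.linftyOpNormedAddCommGroup Matrix.linftyOpNormedRing

attribute [local instance] Matrix.linftyOpNormedAlgebra

set_option maxHeartbeats 4000000

section AuxLemmas

lemma aux_pow_sub_pow {R : Type*} [NormedRing R]
    (a b : R) (r : ℝ) (ha : ‖a‖ ≤ r) (hb : ‖b‖ ≤ r) :
    ∀ n : ℕ, ‖a ^ (n + 1) - b ^ (n + 1)‖ ≤ (n + 1) * r ^ n * ‖a - b‖ := by
  have hr : 0 ≤ r := (norm_nonneg a).trans ha
  have hpow : ∀ (x : R), ‖x‖ ≤ r → ∀ k : ℕ, ‖x ^ (k + 1)‖ ≤ r ^ (k + 1) := fun x hx k =>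
    (norm_pow_le' x k.succ_pos).trans (pow_le_pow_left₀ (norm_nonneg x) hx _)
  intro n
  induction n with
  | zero => simp
  | succ n ih =>
    have key : a ^ (n + 2) - b ^ (n + 2)
        = a ^ (n + 1) * (a - b) + (a ^ (n + 1) - b ^ (n + 1)) * b := by
      noncomm_ring
    calc ‖a ^ (n + 2) - b ^ (n + 2)‖
        ≤ ‖a ^ (n + 1) * (a - b)‖ + ‖(a ^ (n + 1) - b ^ (n + 1)) * b‖ := by
          rw [key]; exact norm_add_le _ _
      _ ≤ ‖a ^ (n + 1)‖ * ‖a - b‖ + ‖a ^ (n + 1) - b ^ (n + 1)‖ * ‖b‖ :=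
          add_le_add (norm_mul_le _ _) (norm_mul_le _ _)
      _ ≤ r ^ (n + 1) * ‖a - b‖ + (((n : ℝ) + 1) * r ^ n * ‖a - b‖) * r :=
          add_le_add (mul_le_mul_of_nonneg_right (hpow a ha n) (norm_nonneg _))
            (mul_le_mul ih hb (norm_nonneg b) (by positivity))
      _ ≤ ((n : ℝ) + 1 + 1) * r ^ (n + 1) * ‖a - b‖ := by
          have hs : ((n : ℝ) + 1) * r ^ n * ‖a - b‖ * r
              = ((n : ℝ) + 1) * r ^ (n + 1) * ‖a - b‖ := by rw [pow_succ]; ring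
          rw [hs]; linarith
      _ = ((n + 1 : ℕ) + 1 : ℝ) * r ^ (n + 1) * ‖a - b‖ := by push_cast; ring

lemma aux_norm_exp_le {B : Type*} [NormedRing B] [NormOneClass B] [NormedAlgebra ℂ B]
    [CompleteSpace B] (y : B) : ‖NormedSpace.exp y‖ ≤ Real.exp ‖y‖ := by
  rw [NormedSpace.exp_eq_tsum ℂ]
  refine (norm_tsum_le_tsum_norm (NormedSpace.norm_expSeries_summable' y)).trans ?_
  rw [Real.exp_eq_exp_ℝ, NormedSpace.exp_eq_tsum_div]
  refine Summable.tsum_le_tsum (fun n => ?_) (NormedSpace.norm_expSeries_summable' y)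
    (Real.summable_pow_div_factorial ‖y‖)
  rw [norm_smul]
  simp only [norm_inv, Complex.norm_natCast]
  rw [div_eq_inv_mul]
  exact mul_le_mul_of_nonneg_left (norm_pow_le y n) (by positivity)

lemma aux_exp_taylor {B : Type*} [NormedRing B] [NormOneClass B] [NormedAlgebra ℂ B]
    [CompleteSpace B] (y : B) :
    ‖NormedSpace.exp y - 1 - y‖ ≤ ‖y‖ ^ 2 * Real.exp ‖y‖ := by
  have hsum := NormedSpace.expSeries_summable' (𝕂 := ℂ) y
  have hsplit := Summable.sum_add_tsum_nat_add 2 hsum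
  have h2 : (∑ i ∈ Finset.range 2, ((i.factorial : ℂ))⁻¹ • y ^ i) = 1 + y := by
    simp [Finset.sum_range_succ]
  have hexp : NormedSpace.exp y - 1 - y = ∑' n : ℕ, (((n + 2).factorial : ℂ))⁻¹ • y ^ (n + 2) := by
    simp only [NormedSpace.exp_eq_tsum ℂ]
    rw [← hsplit, h2]; abel
  rw [hexp]
  have hsum2 : Summable fun n : ℕ => ‖(((n + 2).factorial : ℂ))⁻¹ • y ^ (n + 2)‖ :=
    ((NormedSpace.norm_expSeries_summable' (𝕂 := ℂ) y).comp_injective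
      (add_left_injective 2))
  refine (norm_tsum_le_tsum_norm hsum2).trans ?_
  have hrhs : Summable fun n : ℕ => ‖y‖ ^ 2 * (‖y‖ ^ n / (n.factorial : ℝ)) :=
    (Real.summable_pow_div_factorial ‖y‖).mul_left _
  have hbd : ∀ n : ℕ, ‖(((n + 2).factorial : ℂ))⁻¹ • y ^ (n + 2)‖
      ≤ ‖y‖ ^ 2 * (‖y‖ ^ n / (n.factorial : ℝ)) := by
    intro n
    rw [norm_smul]
    simp only [norm_inv, Complex.norm_natCast]
    have h1 : ‖y ^ (n + 2)‖ ≤ ‖y‖ ^ 2 * ‖y‖ ^ n := by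
      rw [← pow_add, add_comm 2 n]; exact norm_pow_le y (n + 2)
    have h2 : (((n + 2).factorial : ℝ))⁻¹ ≤ ((n.factorial : ℝ))⁻¹ := by
      have : (n.factorial : ℝ) ≤ ((n + 2).factorial : ℝ) := by
        exact_mod_cast Nat.factorial_le (by omega)
      exact inv_anti₀ (by positivity) this
    calc (((n + 2).factorial : ℝ))⁻¹ * ‖y ^ (n + 2)‖
        ≤ ((n.factorial : ℝ))⁻¹ * (‖y‖ ^ 2 * ‖y‖ ^ n) :=
          mul_le_mul h2 h1 (norm_nonneg _) (by positivity)
      _ = ‖y‖ ^ 2 * (‖y‖ ^ n / (n.factorial : ℝ)) := by ring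
  refine (Summable.tsum_le_tsum hbd hsum2 hrhs).trans ?_
  rw [tsum_mul_left, Real.exp_eq_exp_ℝ, NormedSpace.exp_eq_tsum_div]

end AuxLemmas

/-- Trotter-type limit. If `A` is Hermitian, `U` unitary and
commuting with `A`, and `T₁(u) = U(Id + uA) + O(u²)`,
`T₂(u) = U⁻¹(Id + uA) + O(u²)` are positive definite (hence invertible) for
`u` near `0`, then for `β > 0` and even Trotter number `N = 2M`,
`(T₁(−β/N) T₂(−β/N))^{N/2} → exp(−βA)` as `N → ∞`. -/
theorem trotter_limit_with_unitary {d : ℕ}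
    (A : Matrix (Fin d) (Fin d) ℂ) (hA : A.IsHermitian)
    (U : Matrix (Fin d) (Fin d) ℂ) (hU : U ∈ Matrix.unitaryGroup (Fin d) ℂ)
    (hUA : U * A = A * U)
    (T₁ T₂ : ℝ → Matrix (Fin d) (Fin d) ℂ)
    (C ε : ℝ) (hε : 0 < ε)
    (hpos₁ : ∀ u : ℝ, |u| < ε → (T₁ u).PosDef)
    (hpos₂ : ∀ u : ℝ, |u| < ε → (T₂ u).PosDef)
    (hT₁ : ∀ u : ℝ, |u| < ε →
      ‖T₁ u - U * (1 + (u : ℂ) • A)‖ ≤ C * u ^ 2)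
    (hT₂ : ∀ u : ℝ, |u| < ε →
      ‖T₂ u - star U * (1 + (u : ℂ) • A)‖ ≤ C * u ^ 2)
    (β : ℝ) (hβ : 0 < β) :
    Tendsto (fun M : ℕ => (T₁ (-β / (2 * M)) * T₂ (-β / (2 * M))) ^ M)
      atTop (nhds (NormedSpace.exp ((-β : ℂ) • A))) := by
  rcases Nat.eq_zero_or_pos d with hd | hd
  · subst hd
    haveI : Subsingleton (Matrix (Fin 0) (Fin 0) ℂ) := ⟨fun a b => by ext i j; exact i.elim0⟩
    have heq : (fun M : ℕ => (T₁ (-β / (2 * M)) * T₂ (-β / (2 * M))) ^ M)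
        = fun _ => NormedSpace.exp ((-β : ℂ) • A) := funext fun _ => Subsingleton.elim _ _
    rw [heq]; exact tendsto_const_nhds
  haveI : Nonempty (Fin d) := ⟨⟨0, hd⟩⟩
  -- basic unitary facts
  have h1 : star U * U = 1 := (Unitary.mem_iff.mp hU).1
  have h2 : U * star U = 1 := (Unitary.mem_iff.mp hU).2
  have h3 : A * star U = star U * A := by
    have hc := congrArg (fun X => star U * X * star U) hUA
    calc A * star U = (star U * U) * (A * star U) := by rw [h1, one_mul]
      _ = star U * (U * A) * star U := by simp only [mul_assoc]
      _ = star U * (A * U) * star U := by rw [hUA]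
      _ = star U * A * (U * star U) := by simp only [mul_assoc]
      _ = star U * A := by rw [h2, mul_one]
  -- constants
  set a : ℝ := ‖A‖ with ha_def
  set C' : ℝ := max C 0 with hC'_def
  have hC'0 : 0 ≤ C' := le_max_right _ _
  set c₁ : ℝ := ‖U‖ with hc₁_def
  set c₂ : ℝ := ‖star U‖ with hc₂_def
  set bnd : ℝ := 1 + ε * a with hbnd_def
  have hbnd0 : 0 ≤ bnd := by positivity
  set K₁ : ℝ := C' * (c₂ * bnd + C' * ε ^ 2) + c₁ * bnd * C' + a ^ 2 with hK₁_def
  set K₂ : ℝ := 4 * a ^ 2 * Real.exp (2 * ε * a) with hK₂_def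
  set K : ℝ := K₁ + K₂ with hK_def
  have hK0 : 0 ≤ K := by positivity
  -- bound on 1 + uA
  have h1uA : ∀ u : ℝ, |u| < ε → ‖(1 : Matrix (Fin d) (Fin d) ℂ) + (u : ℂ) • A‖ ≤ bnd := by
    intro u hu
    calc ‖(1 : Matrix (Fin d) (Fin d) ℂ) + (u : ℂ) • A‖ ≤ ‖(1 : Matrix (Fin d) (Fin d) ℂ)‖ + ‖(u : ℂ) • A‖ := norm_add_le _ _
      _ = 1 + |u| * a := by rw [norm_one, norm_smul, Complex.norm_real, Real.norm_eq_abs]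
      _ ≤ 1 + ε * a := by
          have ha0 : (0:ℝ) ≤ a := norm_nonneg A
          nlinarith [hu.le, abs_nonneg u]
  -- key algebraic identity
  have hkey : ∀ z : ℂ,
      (U * (1 + z • A)) * (star U * (1 + z • A))
        = 1 + (2 * z) • A + (z * z) • (A * A) := by
    intro z
    have hcomm : (1 + z • A) * star U = star U * (1 + z • A) := by
      rw [add_mul, mul_add, one_mul, mul_one, smul_mul_assoc, mul_smul_comm, h3]
    calc (U * (1 + z • A)) * (star U * (1 + z • A))
        = U * ((1 + z • A) * star U * (1 + z • A)) := by simp only [mul_assoc]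
      _ = U * (star U * ((1 + z • A) * (1 + z • A))) := by rw [hcomm]; simp only [mul_assoc]
      _ = (U * star U) * ((1 + z • A) * (1 + z • A)) := by simp only [mul_assoc]
      _ = (1 + z • A) * (1 + z • A) := by rw [h2, one_mul]
      _ = 1 + (2 * z) • A + (z * z) • (A * A) := by
          simp only [mul_add, add_mul, one_mul, mul_one, smul_mul_assoc, mul_smul_comm]
          module
  -- step bound
  have hstep : ∀ u : ℝ, |u| < ε →
      ‖T₁ u * T₂ u - NormedSpace.exp (((2 * u : ℝ) : ℂ) • A)‖ ≤ K * u ^ 2 := by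
    intro u hu
    set P := U * (1 + (u : ℂ) • A) with hP_def
    set Q := star U * (1 + (u : ℂ) • A) with hQ_def
    have hCC : C * u ^ 2 ≤ C' * u ^ 2 :=
      mul_le_mul_of_nonneg_right (le_max_left C 0) (sq_nonneg u)
    have hT₁u : ‖T₁ u - P‖ ≤ C' * u ^ 2 := (hT₁ u hu).trans hCC
    have hT₂u : ‖T₂ u - Q‖ ≤ C' * u ^ 2 := (hT₂ u hu).trans hCC
    have hPn : ‖P‖ ≤ c₁ * bnd :=
      (norm_mul_le _ _).trans (mul_le_mul_of_nonneg_left (h1uA u hu) (norm_nonneg U))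
    have hQn : ‖Q‖ ≤ c₂ * bnd :=
      (norm_mul_le _ _).trans (mul_le_mul_of_nonneg_left (h1uA u hu) (norm_nonneg (star U)))
    have hu2 : u ^ 2 ≤ ε ^ 2 := by nlinarith [abs_nonneg u, hu.le, sq_abs u]
    have hT₂n : ‖T₂ u‖ ≤ c₂ * bnd + C' * ε ^ 2 := by
      have ht : ‖T₂ u‖ ≤ ‖T₂ u - Q‖ + ‖Q‖ := by
        calc ‖T₂ u‖ = ‖(T₂ u - Q) + Q‖ := by rw [sub_add_cancel]
          _ ≤ ‖T₂ u - Q‖ + ‖Q‖ := norm_add_le _ _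
      nlinarith [hC'0]
    have hsplit : T₁ u * T₂ u - P * Q = (T₁ u - P) * T₂ u + P * (T₂ u - Q) := by
      noncomm_ring
    have hPQbound : ‖T₁ u * T₂ u - P * Q‖
        ≤ (C' * (c₂ * bnd + C' * ε ^ 2) + c₁ * bnd * C') * u ^ 2 := by
      rw [hsplit]
      calc ‖(T₁ u - P) * T₂ u + P * (T₂ u - Q)‖
          ≤ ‖(T₁ u - P) * T₂ u‖ + ‖P * (T₂ u - Q)‖ := norm_add_le _ _
        _ ≤ ‖T₁ u - P‖ * ‖T₂ u‖ + ‖P‖ * ‖T₂ u - Q‖ :=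
            add_le_add (norm_mul_le _ _) (norm_mul_le _ _)
        _ ≤ (C' * u ^ 2) * (c₂ * bnd + C' * ε ^ 2) + (c₁ * bnd) * (C' * u ^ 2) := by
            refine add_le_add (mul_le_mul hT₁u hT₂n (norm_nonneg _) (by positivity))
              (mul_le_mul hPn hT₂u (norm_nonneg _) (by positivity))
        _ = (C' * (c₂ * bnd + C' * ε ^ 2) + c₁ * bnd * C') * u ^ 2 := by ring
    have hz : ((2 * u : ℝ) : ℂ) = 2 * (u : ℂ) := by push_cast; ring
    set y : Matrix (Fin d) (Fin d) ℂ := ((2 * u : ℝ) : ℂ) • A with hy_def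
    have hPQ : P * Q = 1 + y + ((u : ℂ) * (u : ℂ)) • (A * A) := by
      rw [hP_def, hQ_def, hkey (u : ℂ), hy_def, hz]
    have hyn : ‖y‖ = 2 * |u| * a := by
      rw [hy_def, norm_smul, Complex.norm_real, Real.norm_eq_abs, abs_mul]
      norm_num
      exact Or.inl rfl
    have hEtay : ‖NormedSpace.exp y - (1 + y)‖ ≤ K₂ * u ^ 2 := by
      have h := aux_exp_taylor y
      rw [sub_sub] at h
      refine h.trans ?_
      rw [hyn, hK₂_def]
      have ha0 : (0:ℝ) ≤ a := norm_nonneg A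
      have hexple : Real.exp (2 * |u| * a) ≤ Real.exp (2 * ε * a) := by
        apply Real.exp_le_exp.mpr
        nlinarith [hu.le, abs_nonneg u]
      have hsq : (2 * |u| * a) ^ 2 = 4 * a ^ 2 * u ^ 2 := by
        rw [mul_pow, mul_pow, sq_abs]; ring
      calc (2 * |u| * a) ^ 2 * Real.exp (2 * |u| * a)
          ≤ (2 * |u| * a) ^ 2 * Real.exp (2 * ε * a) := by
            exact mul_le_mul_of_nonneg_left hexple (by positivity)
        _ = 4 * a ^ 2 * Real.exp (2 * ε * a) * u ^ 2 := by rw [hsq]; ring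
    have hA2 : ‖((u : ℂ) * (u : ℂ)) • (A * A)‖ ≤ a ^ 2 * u ^ 2 := by
      rw [norm_smul]
      have h1 : ‖(u : ℂ) * (u : ℂ)‖ = u ^ 2 := by
        rw [norm_mul, Complex.norm_real, Real.norm_eq_abs, ← sq, sq_abs]
      rw [h1]
      calc u ^ 2 * ‖A * A‖ ≤ u ^ 2 * (a * a) :=
            mul_le_mul_of_nonneg_left (norm_mul_le A A) (sq_nonneg u)
        _ = a ^ 2 * u ^ 2 := by ring
    have hdecomp : T₁ u * T₂ u - NormedSpace.exp y
        = (T₁ u * T₂ u - P * Q) + ((u : ℂ) * (u : ℂ)) • (A * A)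
          - (NormedSpace.exp y - (1 + y)) := by
      rw [hPQ]; abel
    calc ‖T₁ u * T₂ u - NormedSpace.exp y‖
        ≤ ‖(T₁ u * T₂ u - P * Q) + ((u : ℂ) * (u : ℂ)) • (A * A)‖
          + ‖NormedSpace.exp y - (1 + y)‖ := by rw [hdecomp]; exact norm_sub_le _ _
      _ ≤ ‖T₁ u * T₂ u - P * Q‖ + ‖((u : ℂ) * (u : ℂ)) • (A * A)‖
          + ‖NormedSpace.exp y - (1 + y)‖ := by
            gcongr
            exact norm_add_le _ _
      _ ≤ (C' * (c₂ * bnd + C' * ε ^ 2) + c₁ * bnd * C') * u ^ 2 + a ^ 2 * u ^ 2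
          + K₂ * u ^ 2 := add_le_add (add_le_add hPQbound hA2) hEtay
      _ = K * u ^ 2 := by rw [hK_def, hK₁_def]; ring
  -- overall constant
  set c : ℝ := β * a + K * β ^ 2 / 4 with hc_def
  have ha0 : (0:ℝ) ≤ a := norm_nonneg A
  have hc0 : 0 ≤ c := by
    rw [hc_def]
    have h1 : 0 ≤ β * a := mul_nonneg hβ.le ha0
    have h2 : 0 ≤ K * β ^ 2 / 4 := by positivity
    linarith
  -- eventual smallness of the parameter
  have hu0 : Tendsto (fun M : ℕ => -β / (2 * (M:ℝ))) atTop (nhds 0) := by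
    simpa [div_div] using tendsto_const_div_atTop_nhds_zero_nat (-β / 2)
  have hev : ∀ᶠ M : ℕ in atTop, |(-β / (2 * (M:ℝ)))| < ε := by
    filter_upwards [hu0 (Metric.ball_mem_nhds 0 hε)] with M hM
    simp only [Set.mem_preimage, Metric.mem_ball, Real.dist_eq, sub_zero] at hM
    exact hM
  refine tendsto_iff_norm_sub_tendsto_zero.mpr ?_
  have key : ∀ᶠ M : ℕ in atTop,
      ‖(T₁ (-β / (2 * (M:ℝ))) * T₂ (-β / (2 * (M:ℝ)))) ^ M
        - NormedSpace.exp ((-β : ℂ) • A)‖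
        ≤ (Real.exp c * (K * β ^ 2 / 4)) / (M:ℝ) := by
    filter_upwards [hev, eventually_ge_atTop 1] with M hM hM1
    obtain ⟨m, rfl⟩ : ∃ m, M = m + 1 := ⟨M - 1, by omega⟩
    set u : ℝ := -β / (2 * ((m + 1 : ℕ) : ℝ)) with hu_def
    have hMpos : (0:ℝ) < ((m + 1 : ℕ) : ℝ) := by positivity
    have hMne : ((m + 1 : ℕ) : ℝ) ≠ 0 := ne_of_gt hMpos
    set D := T₁ u * T₂ u with hD_def
    set y : Matrix (Fin d) (Fin d) ℂ := ((2 * u : ℝ) : ℂ) • A with hy_def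
    set E := NormedSpace.exp y with hE_def
    have hDE : ‖D - E‖ ≤ K * u ^ 2 := hstep u hM
    have h2u : (2 * u : ℝ) = -β / ((m + 1 : ℕ) : ℝ) := by
      rw [hu_def]; field_simp
    have habs2u : |(2 * u : ℝ)| = β / ((m + 1 : ℕ) : ℝ) := by
      rw [h2u, abs_div, abs_neg, abs_of_pos hβ, abs_of_pos hMpos]
    -- power of exponential
    have hzA : (m + 1 : ℕ) • y = (-β : ℂ) • A := by
      rw [hy_def, ← Nat.cast_smul_eq_nsmul ℂ, smul_smul]
      congr 1
      rw [h2u]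
      have : (((m + 1 : ℕ) : ℝ) : ℂ) ≠ 0 := by exact_mod_cast hMne
      push_cast
      field_simp
    have hEpow : E ^ (m + 1) = NormedSpace.exp ((-β : ℂ) • A) := by
      rw [← hzA, hE_def]
      exact (NormedSpace.exp_nsmul _ _).symm
    -- norm bounds
    have hyn : ‖y‖ = β * a / ((m + 1 : ℕ) : ℝ) := by
      rw [hy_def, norm_smul, Complex.norm_real, Real.norm_eq_abs, habs2u]
      ring
    have hEn : ‖E‖ ≤ Real.exp (c / ((m + 1 : ℕ) : ℝ)) := by
      refine (aux_norm_exp_le y).trans (Real.exp_le_exp.mpr ?_)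
      rw [hyn, hc_def]
      rw [div_le_div_iff₀ hMpos hMpos]
      have h4 : 0 ≤ (K * β ^ 2 / 4) * ((m + 1 : ℕ) : ℝ) :=
        mul_nonneg (by positivity) hMpos.le
      nlinarith [h4]
    have hu2 : u ^ 2 = β ^ 2 / (4 * ((m + 1 : ℕ) : ℝ) ^ 2) := by
      rw [hu_def, div_pow, neg_pow]
      ring_nf
    have hX1 : (1:ℝ) ≤ ((m + 1 : ℕ) : ℝ) := by push_cast; linarith [Nat.cast_nonneg (α := ℝ) m]
    have hDEn : K * u ^ 2 ≤ (K * β ^ 2 / 4) / ((m + 1 : ℕ) : ℝ) := by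
      have h12 : (1:ℝ) / ((m + 1 : ℕ) : ℝ) ^ 2 ≤ 1 / ((m + 1 : ℕ) : ℝ) :=
        one_div_le_one_div_of_le hMpos (by nlinarith)
      calc K * u ^ 2 = (K * β ^ 2 / 4) * (1 / ((m + 1 : ℕ) : ℝ) ^ 2) := by rw [hu2]; ring
        _ ≤ (K * β ^ 2 / 4) * (1 / ((m + 1 : ℕ) : ℝ)) :=
            mul_le_mul_of_nonneg_left h12 (by positivity)
        _ = (K * β ^ 2 / 4) / ((m + 1 : ℕ) : ℝ) := by ring
    have hDn : ‖D‖ ≤ Real.exp (c / ((m + 1 : ℕ) : ℝ)) := by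
      have ht : ‖D‖ ≤ ‖E‖ + K * u ^ 2 := by
        calc ‖D‖ = ‖E + (D - E)‖ := by rw [add_sub_cancel]
          _ ≤ ‖E‖ + ‖D - E‖ := norm_add_le _ _
          _ ≤ ‖E‖ + K * u ^ 2 := by linarith
      have hEn' : ‖E‖ ≤ Real.exp (β * a / ((m + 1 : ℕ) : ℝ)) := by
        refine (aux_norm_exp_le y).trans (Real.exp_le_exp.mpr ?_)
        rw [hyn]
      have hsplitc : c / ((m + 1 : ℕ) : ℝ)
          = β * a / ((m + 1 : ℕ) : ℝ) + (K * β ^ 2 / 4) / ((m + 1 : ℕ) : ℝ) := by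
        rw [hc_def]; ring
      have hexpadd : Real.exp (c / ((m + 1 : ℕ) : ℝ))
          = Real.exp (β * a / ((m + 1 : ℕ) : ℝ))
            * Real.exp ((K * β ^ 2 / 4) / ((m + 1 : ℕ) : ℝ)) := by
        rw [hsplitc, Real.exp_add]
      have h1 : (1:ℝ) ≤ Real.exp (β * a / ((m + 1 : ℕ) : ℝ)) :=
        Real.one_le_exp (by positivity)
      have h2 : (K * β ^ 2 / 4) / ((m + 1 : ℕ) : ℝ) + 1
          ≤ Real.exp ((K * β ^ 2 / 4) / ((m + 1 : ℕ) : ℝ)) := Real.add_one_le_exp _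
      have h3 : (0:ℝ) ≤ (K * β ^ 2 / 4) / ((m + 1 : ℕ) : ℝ) := by positivity
      rw [hexpadd]
      nlinarith [hDEn, ht, norm_nonneg E]
    -- telescoping
    have htel := aux_pow_sub_pow D E (Real.exp (c / ((m + 1 : ℕ) : ℝ))) hDn hEn m
    have hpow_le : Real.exp (c / ((m + 1 : ℕ) : ℝ)) ^ m ≤ Real.exp c := by
      rw [← Real.exp_nat_mul]
      apply Real.exp_le_exp.mpr
      have hfrac : ((m:ℝ)) / ((m + 1 : ℕ) : ℝ) ≤ 1 := by
        rw [div_le_one hMpos]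
        push_cast; linarith
      have := mul_le_mul_of_nonneg_left hfrac hc0
      calc (m:ℝ) * (c / ((m + 1 : ℕ) : ℝ)) = c * ((m:ℝ) / ((m + 1 : ℕ) : ℝ)) := by ring
        _ ≤ c * 1 := this
        _ = c := mul_one c
    rw [← hEpow]
    calc ‖D ^ (m + 1) - E ^ (m + 1)‖
        ≤ ((m:ℝ) + 1) * Real.exp (c / ((m + 1 : ℕ) : ℝ)) ^ m * ‖D - E‖ := htel
      _ ≤ ((m:ℝ) + 1) * Real.exp c * (K * u ^ 2) := by
          have hn0 : (0:ℝ) ≤ (m:ℝ) + 1 := by positivity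
          calc ((m:ℝ) + 1) * Real.exp (c / ((m + 1 : ℕ) : ℝ)) ^ m * ‖D - E‖
              ≤ ((m:ℝ) + 1) * Real.exp c * ‖D - E‖ := by
                refine mul_le_mul_of_nonneg_right ?_ (norm_nonneg _)
                exact mul_le_mul_of_nonneg_left hpow_le hn0
            _ ≤ ((m:ℝ) + 1) * Real.exp c * (K * u ^ 2) := by
                refine mul_le_mul_of_nonneg_left hDE (by positivity)
      _ = (Real.exp c * (K * (β ^ 2 / (4 * ((m + 1 : ℕ) : ℝ) ^ 2)))) * ((m:ℝ) + 1) := by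
          rw [hu2]; ring
      _ = (Real.exp c * (K * β ^ 2 / 4)) / ((m + 1 : ℕ) : ℝ) := by
          have hm1 : ((m:ℝ) + 1) ≠ 0 := by positivity
          push_cast
          field_simp
  refine squeeze_zero' (Eventually.of_forall fun M => norm_nonneg _) key ?_
  simpa using tendsto_const_div_atTop_nhds_zero_nat (Real.exp c * (K * β ^ 2 / 4))
end
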